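/- arXiv:0904.1757 — 2 statements merged into one kernel-verified Lean document; each statement's English description precedes it below -/
import Mathlib

section
/- For every positive integer n, S_n = ((n+1)/(2n)) * S_{n-1} + 1, where S_n = Σ_{k=0}^{n} 1/C(n,k). -/
lemma choose_nat_id (m k : ℕ) (hk : k ≤ m) :
    (m+1).choose k * (m+1-k) = (m+1) * m.choose k := by
  have h1 : (m+1).choose (m-k+1) * (m-k+1) = (m+1) * m.choose (m-k) := by
    rw [← Nat.add_one_mul_choose_eq]
  have e1 : (m+1).choose (m-k+1) = (m+1).choose k := by
    rw [← Nat.choose_symm (by omega : m-k+1 ≤ m+1)]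
    congr 1; omega
  have e2 : m.choose (m-k) = m.choose k := Nat.choose_symm hk
  rw [e1, e2] at h1
  have : m + 1 - k = m - k + 1 := by omega
  rw [this]; exact h1

lemma key (m k : ℕ) (hk : k ≤ m) :
    (1:ℝ)/(m+1).choose k + 1/(m+1).choose (k+1) = ((m+2)/(m+1)) * (1/ m.choose k) := by
  have h1 : ((m+1).choose (k+1) * (k+1) : ℝ) = (m+1) * m.choose k := by
    exact_mod_cast congrArg (Nat.cast (R := ℝ)) (Nat.add_one_mul_choose_eq m k).symm
  have h2 : ((m+1).choose k * (m+1-k : ℕ) : ℝ) = (m+1) * m.choose k := by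
    exact_mod_cast congrArg (Nat.cast (R := ℝ)) (choose_nat_id m k hk)
  have hc : (0:ℝ) < m.choose k := by exact_mod_cast Nat.choose_pos hk
  have ha : (0:ℝ) < (m+1).choose k := by exact_mod_cast Nat.choose_pos (by omega : k ≤ m+1)
  have hb : (0:ℝ) < (m+1).choose (k+1) := by exact_mod_cast Nat.choose_pos (by omega : k+1 ≤ m+1)
  have hcast : ((m+1-k : ℕ) : ℝ) = (m:ℝ)+1-k := by
    have : k ≤ m + 1 := by omega
    push_cast [this]; ring
  rw [hcast] at h2
  have hm1 : (m:ℝ)+1 ≠ 0 := by positivity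
  field_simp
  nlinarith [mul_pos ha hb, mul_pos hc ha, mul_pos hc hb]

theorem stmt_2 (n : ℕ) (hn : 0 < n)
    (S : ℕ → ℝ) (hS : ∀ m, S m = ∑ k ∈ Finset.range (m + 1), (1 : ℝ) / m.choose k) :
    S n = ((n + 1 : ℝ) / (2 * n)) * S (n - 1) + 1 := by
  obtain ⟨m, rfl⟩ : ∃ m, n = m + 1 := ⟨n - 1, by omega⟩
  have hm1 : (m:ℝ)+1 ≠ 0 := by positivity
  have hA : ∑ k ∈ Finset.range (m+1), (1:ℝ)/(m+1).choose k = S (m+1) - 1 := by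
    rw [hS (m+1), Finset.sum_range_succ _ (m+1)]
    simp [Nat.choose_self]
  have hB : ∑ k ∈ Finset.range (m+1), (1:ℝ)/(m+1).choose (k+1) = S (m+1) - 1 := by
    rw [hS (m+1), Finset.sum_range_succ' _ (m+1)]
    simp
  have hsum : (((m:ℝ)+2)/((m:ℝ)+1)) * S m = 2 * S (m+1) - 2 := by
    rw [hS m, Finset.mul_sum]
    have : ∀ k ∈ Finset.range (m+1), (((m:ℝ)+2)/((m:ℝ)+1)) * (1/ m.choose k)
        = 1/(m+1).choose k + 1/(m+1).choose (k+1) := by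
      intro k hk
      exact (key m k (by simpa using Nat.lt_succ_iff.mp (Finset.mem_range.mp hk))).symm
    rw [Finset.sum_congr rfl this, Finset.sum_add_distrib, hA, hB]
    ring
  have h2 : S (m+1) = ((m:ℝ)+2)/((m:ℝ)+1) * S m / 2 + 1 := by linarith
  push_cast
  rw [h2]
  field_simp
  ring
end

section
/- For every natural number l, s_l = (1/4) Σ_{n≥0} (n+1) n^l / 2^n, with the series converging (convention 0^0 = 1). -/
def stirling2 : ℕ → ℕ → ℕ
  | 0, 0 => 1
  | 0, _ + 1 => 0
  | _ + 1, 0 => 0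
  | n + 1, k + 1 => stirling2 n k + (k + 1) * stirling2 n (k + 1)

/-- Barred preferential arrangement number. -/
def barredFubini (l : ℕ) : ℕ :=
  ∑ k ∈ Finset.range (l + 1), stirling2 l k * Nat.factorial (k + 1)

def fub (l : ℕ) : ℕ := ∑ k ∈ Finset.range (l + 1), stirling2 l k * Nat.factorial k

lemma stirling2_eq_zero : ∀ {l k : ℕ}, l < k → stirling2 l k = 0
  | 0, _ + 1, _ => rfl
  | l + 1, k + 1, h => by
      rw [stirling2, stirling2_eq_zero (by omega), stirling2_eq_zero (by omega)]
      ring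

lemma choose_mul (n k : ℕ) : n * n.choose k = (k + 1) * n.choose (k + 1) + k * n.choose k := by
  rcases le_or_gt k n with h | h
  · have h1 := Nat.choose_succ_right_eq n k
    have h2 : (k + 1) * n.choose (k + 1) = (n - k) * n.choose k := by
      rw [mul_comm, h1, mul_comm]
    rw [h2, ← Nat.add_mul, Nat.sub_add_cancel h]
  · rw [Nat.choose_eq_zero_of_lt h, Nat.choose_eq_zero_of_lt (by omega)]
    ring

lemma stirlingId (l n : ℕ) :
    n ^ l = ∑ k ∈ Finset.range (l + 1), stirling2 l k * k.factorial * n.choose k := by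
  induction l with
  | zero => simp [stirling2]
  | succ l ih =>
    have step : n ^ (l + 1)
        = ∑ k ∈ Finset.range (l + 1),
            (stirling2 l k * (k + 1).factorial * n.choose (k + 1)
              + k * (stirling2 l k * k.factorial) * n.choose k) := by
      rw [pow_succ, ih, Finset.sum_mul]
      refine Finset.sum_congr rfl fun k _ => ?_
      rw [mul_comm _ n, mul_comm (stirling2 l k * k.factorial), ← mul_assoc, choose_mul,
        Nat.factorial_succ]
      ring
    rw [step, Finset.sum_add_distrib]
    have hsecond : ∑ k ∈ Finset.range (l + 1), k * (stirling2 l k * k.factorial) * n.choose k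
        = ∑ k ∈ Finset.range (l + 1),
            (k + 1) * (stirling2 l (k + 1) * (k + 1).factorial) * n.choose (k + 1) := by
      rw [Finset.sum_range_succ' (fun k => k * (stirling2 l k * k.factorial) * n.choose k)]
      rw [Finset.sum_range_succ
        (fun k => (k + 1) * (stirling2 l (k + 1) * (k + 1).factorial) * n.choose (k + 1))]
      simp [stirling2_eq_zero (Nat.lt_succ_self l)]
    rw [hsecond, ← Finset.sum_add_distrib,
      Finset.sum_range_succ' (fun k => stirling2 (l + 1) k * k.factorial * n.choose k)]
    have h0 : stirling2 (l + 1) 0 = 0 := rfl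
    rw [h0]
    simp only [Nat.zero_eq, zero_mul, mul_zero, add_zero, Nat.factorial]
    refine (Finset.sum_congr rfl fun k _ => ?_).symm
    show stirling2 (l + 1) (k + 1) * (k + 1).factorial * n.choose (k + 1) = _
    rw [stirling2]
    simp only [Nat.add_comm 1 k, Nat.factorial_succ, Nat.succ_eq_add_one]
    ring

lemma fubId (l : ℕ) : fub (l + 1) + fub l = 2 * barredFubini l := by
  have h1 : fub (l + 1)
      = ∑ k ∈ Finset.range (l + 1),
          (stirling2 l k * (k + 1).factorial + (k + 1) * (stirling2 l (k + 1) * (k + 1).factorial)) := by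
    unfold fub
    rw [Finset.sum_range_succ' (fun k => stirling2 (l + 1) k * k.factorial)]
    have h0 : stirling2 (l + 1) 0 = 0 := rfl
    rw [h0]
    simp only [zero_mul, add_zero]
    refine Finset.sum_congr rfl fun k _ => ?_
    show stirling2 (l + 1) (k + 1) * (k + 1).factorial = _
    rw [stirling2]; ring
  have h2 : ∑ k ∈ Finset.range (l + 1), (k + 1) * (stirling2 l (k + 1) * (k + 1).factorial)
      = ∑ k ∈ Finset.range (l + 1), k * (stirling2 l k * k.factorial) := by
    rw [Finset.sum_range_succ' (fun k => k * (stirling2 l k * k.factorial))]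
    rw [Finset.sum_range_succ
      (fun k => (k + 1) * (stirling2 l (k + 1) * (k + 1).factorial))]
    simp [stirling2_eq_zero (Nat.lt_succ_self l)]
  rw [h1, Finset.sum_add_distrib, h2]
  unfold fub barredFubini
  rw [two_mul, add_assoc]
  congr 1
  rw [← Finset.sum_add_distrib]
  refine Finset.sum_congr rfl fun k _ => ?_
  rw [Nat.factorial_succ]
  ring

lemma chooseHasSum (k : ℕ) : HasSum (fun n : ℕ => (n.choose k : ℝ) / 2 ^ n) 2 := by
  have hr : ‖(1 / 2 : ℝ)‖ < 1 := by norm_num [Real.norm_eq_abs]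
  have h := (hasSum_choose_mul_geometric_of_norm_lt_one k hr).mul_left ((1 / 2 : ℝ) ^ k)
  have hfun : (fun n : ℕ => (1 / 2 : ℝ) ^ k * (((n + k).choose k : ℝ) * (1 / 2) ^ n))
      = fun n : ℕ => ((n + k).choose k : ℝ) / 2 ^ (n + k) := by
    funext n
    simp only [one_div, pow_add, div_eq_mul_inv, mul_inv, ← inv_pow]
    ring
  rw [hfun] at h
  have h2 := (hasSum_nat_add_iff (f := fun n : ℕ => ((n).choose k : ℝ) / 2 ^ n) k).mp h
  have hz : ∑ i ∈ Finset.range k, ((i.choose k : ℝ) / 2 ^ i) = 0 := by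
    refine Finset.sum_eq_zero fun i hi => ?_
    rw [Nat.choose_eq_zero_of_lt (Finset.mem_range.mp hi)]
    simp
  rw [hz, add_zero] at h2
  convert h2 using 2
  · rfl
  rw [show (1 : ℝ) - 1/2 = 1/2 by norm_num, pow_succ]
  simp only [one_div, mul_inv, inv_inv, ← inv_pow]
  rw [← mul_assoc, inv_pow, inv_mul_cancel₀ (by positivity : (2:ℝ)^k ≠ 0), one_mul]

lemma powHasSum (m : ℕ) : HasSum (fun n : ℕ => (n : ℝ) ^ m / 2 ^ n) (2 * fub m) := by
  have h : ∀ n : ℕ, (n : ℝ) ^ m / 2 ^ n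
      = ∑ k ∈ Finset.range (m + 1),
          ((stirling2 m k * k.factorial : ℕ) : ℝ) * ((n.choose k : ℝ) / 2 ^ n) := by
    intro n
    have := stirlingId m n
    calc (n : ℝ) ^ m / 2 ^ n = ((n ^ m : ℕ) : ℝ) / 2 ^ n := by push_cast; ring
      _ = _ := by
          rw [this]
          push_cast
          rw [Finset.sum_div]
          refine Finset.sum_congr rfl fun k _ => by ring
  have hsum : HasSum (fun n : ℕ => ∑ k ∈ Finset.range (m + 1),
      ((stirling2 m k * k.factorial : ℕ) : ℝ) * ((n.choose k : ℝ) / 2 ^ n))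
      (∑ k ∈ Finset.range (m + 1), ((stirling2 m k * k.factorial : ℕ) : ℝ) * 2) :=
    hasSum_sum fun k _ => (chooseHasSum k).mul_left _
  have : (∑ k ∈ Finset.range (m + 1), ((stirling2 m k * k.factorial : ℕ) : ℝ) * 2)
      = 2 * fub m := by
    unfold fub
    push_cast
    rw [← Finset.sum_mul, mul_comm]
  rw [this] at hsum
  have hfe : (fun n : ℕ => ∑ k ∈ Finset.range (m + 1),
      ((stirling2 m k * k.factorial : ℕ) : ℝ) * ((n.choose k : ℝ) / 2 ^ n))
      = fun n : ℕ => (n : ℝ) ^ m / 2 ^ n := funext fun n => (h n).symm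
  rwa [hfe] at hsum

theorem stmt_13 (l : ℕ) :
    HasSum (fun n : ℕ => ((n : ℝ) + 1) * (n : ℝ) ^ l / 2 ^ n) (4 * barredFubini l) := by
  have h := (powHasSum (l + 1)).add (powHasSum l)
  have hfun : (fun n : ℕ => (n : ℝ) ^ (l + 1) / 2 ^ n + (n : ℝ) ^ l / 2 ^ n)
      = fun n : ℕ => ((n : ℝ) + 1) * (n : ℝ) ^ l / 2 ^ n := by
    funext n
    rw [pow_succ]
    ring
  rw [hfun] at h
  have hval : (2 * (fub (l + 1) : ℝ) + 2 * (fub l : ℝ)) = 4 * barredFubini l := by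
    have := fubId l
    have h2 : ((fub (l + 1) + fub l : ℕ) : ℝ) = ((2 * barredFubini l : ℕ) : ℝ) := by rw [this]
    push_cast at h2
    linarith
  rwa [hval] at h
end
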